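/- Let K be an odd positive integer, let γ : {0,…,K} → ℝ satisfy γ(l) = γ(K−l) for all l, and let α : {0,…,K} → ℝ be arbitrary. Then Σ_{l=(K+1)/2}^{K} α_l − Σ_{l=0}^{K} ( γ(l)·1{l ≥ (K+1)/2} + (1 − γ(l))/2 ) · α_l = (1/2) Σ_{l=(K+1)/2}^{K} (1 − γ(l)) (α_l − α_{K−l}). In particular, when (α_l) is the probability mass function of the sum of K binary outcomes, the error of DaRRM with symmetric noise function γ equals |(1/2) Σ_{l=(K+1)/2}^{K} (1 − γ(l)) (α_l − α_{K−l})|, which is an affine function of the values γ((K+1)/2), …, γ(K). -/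

import Mathlib

open Finset

/-- for symmetric `γ`, the difference between the probability the
true majority is 1 and the probability DaRRM_γ outputs 1 equals the affine
expression `(1/2) Σ_{l=(K+1)/2}^{K} (1−γ(l))(α_l − α_{K−l})`. -/
theorem statement15 (K : ℕ) (hK : Odd K) (hKpos : 0 < K)
    (γ α : ℕ → ℝ) (hγsym : ∀ l ≤ K, γ l = γ (K - l)) :
    (∑ l ∈ Finset.Icc ((K + 1) / 2) K, α l)
      - ∑ l ∈ Finset.range (K + 1),
          (γ l * (if (K + 1) / 2 ≤ l then (1 : ℝ) else 0) + (1 - γ l) / 2) * α l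
    = (1 / 2) * ∑ l ∈ Finset.Icc ((K + 1) / 2) K, (1 - γ l) * (α l - α (K - l)) := by
  obtain ⟨t, ht⟩ := hK
  subst ht
  have hm : (2 * t + 1 + 1) / 2 = t + 1 := by omega
  rw [hm]
  have hsplit : ∀ f : ℕ → ℝ, ∑ l ∈ Finset.range (2*t+1+1), f l
      = (∑ l ∈ Finset.range (t+1), f l) + ∑ l ∈ Finset.Icc (t+1) (2*t+1), f l := by
    intro f
    rw [Finset.range_eq_Ico, ← Finset.sum_Ico_consecutive f (by omega : 0 ≤ t+1) (by omega : t+1 ≤ 2*t+1+1)]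
    congr 1
    rw [Finset.range_eq_Ico]
  have hrefl : ∀ f : ℕ → ℝ, ∑ l ∈ Finset.range (t+1), f l
      = ∑ l ∈ Finset.Icc (t+1) (2*t+1), f (2*t+1 - l) := by
    intro f
    refine Finset.sum_nbij' (fun l => 2*t+1-l) (fun l => 2*t+1-l) ?_ ?_ ?_ ?_ ?_ <;>
      intro a ha <;> simp only [Finset.mem_range, Finset.mem_Icc] at * <;> first | omega | (congr 1; omega)
  rw [hsplit, hrefl]
  rw [← Finset.sum_add_distrib, ← Finset.sum_sub_distrib, Finset.mul_sum]
  apply Finset.sum_congr rfl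
  intro l hl
  simp only [Finset.mem_Icc] at hl
  have h1 : (t+1 : ℕ) ≤ l := hl.1
  have h2 : l ≤ 2*t+1 := hl.2
  have hif1 : (if t + 1 ≤ l then (1:ℝ) else 0) = 1 := by simp [h1]
  have hif2 : (if t + 1 ≤ 2*t+1-l then (1:ℝ) else 0) = 0 := by
    rw [if_neg]; omega
  have hg : γ (2*t+1-l) = γ l := by
    rw [hγsym (2*t+1-l) (by omega)]
    congr 1; omega
  rw [hif1, hif2, hg]
  ring
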